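/- Let E be a finite effect algebra with (pairwise distinct) atoms a_1,…,a_m, and suppose s_1,…,s_m are nonnegative real numbers such that Σ_{t=1}^m y_t s_t = 1 for every (y_1,…,y_m) ∈ Seq(E). If x_1 = k_1 a_1 ⊕ … ⊕ k_m a_m and x_2 = l_1 a_1 ⊕ … ⊕ l_m a_m are elements of E such that x_1 ⊕ x_2 is defined, then Σ_{t=1}^m k_t s_t + Σ_{t=1}^m l_t s_t ≤ 1, and x_1 ⊕ x_2 = (k_1+l_1) a_1 ⊕ … ⊕ (k_m+l_m) a_m. -/

import Mathlib

/-- An effect algebra: a set with 0, 1 and a partially defined binary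
operation `⊕`, modeled as an `Option`-valued operation. -/
structure EffectAlgebra (E : Type*) where
  oplus : E → E → Option E
  zero : E
  one : E
  comm : ∀ p q, oplus p q = oplus q p
  assoc : ∀ p q r s qr, oplus q r = some qr → oplus p qr = some s →
    ∃ pq, oplus p q = some pq ∧ oplus pq r = some s
  orthosupp : ∀ p, ∃! q, oplus p q = some one
  zero_unit : ∀ p q, oplus one p = some q → p = zero

namespace EffectAlgebra

variable {E : Type*}

/-- `p ≤ q` iff there is `r` with `p ⊕ r` defined and equal to `q`. -/
def le (W : EffectAlgebra E) (p q : E) : Prop := ∃ r, W.oplus p r = some q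

/-- An atom is a minimal element of `E \ {0}`. -/
def IsAtomElem (W : EffectAlgebra E) (x : E) : Prop :=
  x ≠ W.zero ∧ ∀ y : E, W.le y x → y ≠ W.zero → y = x

/-- Partial orthosum of a list of elements. -/
def listSum (W : EffectAlgebra E) : List E → Option E
  | [] => some W.zero
  | x :: xs => (listSum W xs).bind (fun y => W.oplus x y)

/-- The orthosum `k 0 • a 0 ⊕ ⋯ ⊕ k (m-1) • a (m-1)`, when defined. -/
def mulSum (W : EffectAlgebra E) {m : ℕ} (a : Fin m → E) (k : Fin m → ℕ) : Option E :=
  W.listSum ((List.ofFn (fun t => List.replicate (k t) (a t))).flatten)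

/-- `Seq(E)`: tuples `k` with `⨁ k t • a t` defined and equal to `1`. -/
def SeqSet (W : EffectAlgebra E) {m : ℕ} (a : Fin m → E) : Set (Fin m → ℕ) :=
  {k | W.mulSum a k = some W.one}

/-- `a : Fin m → E` enumerates the atoms of `E` without repetition. -/
def AtomFamily (W : EffectAlgebra E) {m : ℕ} (a : Fin m → E) : Prop :=
  Function.Injective a ∧ (∀ t, W.IsAtomElem (a t)) ∧
    ∀ x : E, W.IsAtomElem x → ∃ t, x = a t

/-- `A ∈ M(E)`: the rows of `A` are pairwise distinct and enumerate `Seq(E)`. -/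
def MemM (W : EffectAlgebra E) {m n : ℕ} (a : Fin m → E) (A : Matrix (Fin n) (Fin m) ℕ) : Prop :=
  (∀ i j : Fin n, i ≠ j → ∃ t, A i t ≠ A j t) ∧
    {k : Fin m → ℕ | ∃ i, A i = k} = W.SeqSet a

/-- A state on an effect algebra. -/
def IsState (W : EffectAlgebra E) (s : E → ℝ) : Prop :=
  (∀ x, 0 ≤ s x ∧ s x ≤ 1) ∧ s W.one = 1 ∧
    ∀ p q r, W.oplus p q = some r → s p + s q ≤ 1 ∧ s r = s p + s q

end EffectAlgebra

namespace EffectAlgebra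

variable {E : Type*} (W : EffectAlgebra E)

lemma oplus_one_zero : W.oplus W.one W.zero = some W.one := by
  obtain ⟨q, hq, -⟩ := W.orthosupp W.one
  have := W.zero_unit q W.one hq
  rwa [this] at hq

lemma oplus_zero_left (p : E) : W.oplus W.zero p = some p := by
  obtain ⟨q, hq, -⟩ := W.orthosupp p
  have h1 : W.oplus W.zero W.one = some W.one := by
    rw [W.comm]; exact W.oplus_one_zero
  obtain ⟨zp, hzp, hzpq⟩ := W.assoc W.zero p q W.one W.one hq h1
  obtain ⟨q', hq', huniq⟩ := W.orthosupp q
  have h2 : W.oplus q p = some W.one := by rw [W.comm]; exact hq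
  have h3 : W.oplus q zp = some W.one := by rw [W.comm]; exact hzpq
  rw [huniq zp h3, ← huniq p h2] at hzp
  exact hzp

lemma oplus_zero_right (p : E) : W.oplus p W.zero = some p := by
  rw [W.comm]; exact W.oplus_zero_left p

lemma assoc' (p q r s pq : E) (h1 : W.oplus p q = some pq) (h2 : W.oplus pq r = some s) :
    ∃ qr, W.oplus q r = some qr ∧ W.oplus p qr = some s := by
  have h2' : W.oplus r pq = some s := by rw [W.comm]; exact h2
  obtain ⟨rp, hrp, hrpq⟩ := W.assoc r p q s pq h1 h2'
  have hrp' : W.oplus q rp = some s := by rw [W.comm]; exact hrpq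
  obtain ⟨qr, hqr, hqrp⟩ := W.assoc q r p s rp hrp hrp'
  exact ⟨qr, hqr, by rw [W.comm]; exact hqrp⟩

end EffectAlgebra

namespace EffectAlgebra
variable {E : Type*} (W : EffectAlgebra E)

lemma swap_aux {x y w v z : E} (h1 : W.oplus y w = some v) (h2 : W.oplus x v = some z) :
    ∃ v', W.oplus x w = some v' ∧ W.oplus y v' = some z := by
  obtain ⟨xy, hxy, hxyw⟩ := W.assoc x y w z v h1 h2
  have hyx : W.oplus y x = some xy := by rw [W.comm]; exact hxy
  obtain ⟨v', hv', hyv'⟩ := W.assoc' y x w z xy hyx hxyw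
  exact ⟨v', hv', hyv'⟩

lemma listSum_perm {L1 L2 : List E} (h : L1.Perm L2) :
    ∀ x, W.listSum L1 = some x → W.listSum L2 = some x := by
  induction h with
  | nil => exact fun x hx => hx
  | cons c _ ih =>
    intro x hx
    simp only [listSum, Option.bind_eq_some_iff] at hx ⊢
    obtain ⟨w, hw, hc⟩ := hx
    exact ⟨w, ih w hw, hc⟩
  | swap c d L =>
    intro x hx
    simp only [listSum, Option.bind_eq_some_iff] at hx ⊢
    obtain ⟨w, ⟨u, hu, hdu⟩, hcx⟩ := hx
    obtain ⟨v', h1, h2⟩ := W.swap_aux hdu hcx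
    exact ⟨v', ⟨u, hu, h1⟩, h2⟩
  | trans _ _ ih1 ih2 => exact fun x hx => ih2 x (ih1 x hx)

lemma listSum_append {L1 L2 : List E} {x₁ x₂ x : E}
    (h1 : W.listSum L1 = some x₁) (h2 : W.listSum L2 = some x₂)
    (h3 : W.oplus x₁ x₂ = some x) : W.listSum (L1 ++ L2) = some x := by
  induction L1 generalizing x₁ x with
  | nil =>
    simp only [listSum] at h1
    obtain rfl : W.zero = x₁ := by injection h1
    rw [W.oplus_zero_left] at h3
    obtain rfl : x₂ = x := by injection h3
    simpa using h2
  | cons c L ih =>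
    simp only [listSum, List.cons_append, Option.bind_eq_some_iff] at h1 ⊢
    obtain ⟨w, hw, hcw⟩ := h1
    obtain ⟨wx₂, hwx₂, hcwx₂⟩ := W.assoc' c w x₂ x x₁ hcw h3
    exact ⟨wx₂, ih hw hwx₂, hcwx₂⟩



lemma perm_mix {α : Type*} (A B C D : List α) :
    ((A++B)++(C++D)).Perm ((A++C)++(B++D)) := by
  have h1 : ((B++C)++D).Perm ((C++B)++D) := List.perm_append_comm.append_right D
  simp only [List.append_assoc] at h1 ⊢
  exact h1.append_left A

lemma flatten_add_perm {α : Type*} : ∀ {n : ℕ} (f g : Fin n → List α),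
    (List.ofFn (fun t => f t ++ g t)).flatten.Perm
      ((List.ofFn f).flatten ++ (List.ofFn g).flatten) := by
  intro n
  induction n with
  | zero => intro f g; simp
  | succ n ih =>
    intro f g
    simp only [List.ofFn_succ, List.flatten_cons]
    exact (((ih _ _).append_left _)).trans (perm_mix _ _ _ _)

lemma flatten_single {α : Type*} : ∀ {n : ℕ} (t : Fin n) (f : Fin n → α),
    (List.ofFn (fun u => List.replicate (if u = t then 1 else 0) (f u))).flatten = [f t] := by
  intro n
  induction n with
  | zero => exact fun t => t.elim0
  | succ n ih =>
    intro t f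
    rw [List.ofFn_succ]
    refine Fin.cases ?_ ?_ t
    · simp only [if_pos rfl, List.flatten_cons]
      have : ∀ i : Fin n, (if i.succ = (0 : Fin (n+1)) then 1 else 0) = 0 := by
        intro i; simp [Fin.succ_ne_zero]
      simp [this]
    · intro j
      have h0 : ((0 : Fin (n+1)) = j.succ) = False := by
        simp [(Fin.succ_ne_zero j).symm]
      simp only [h0, if_false, List.replicate_zero, List.flatten_cons, List.nil_append]
      have : (fun i : Fin n => List.replicate (if i.succ = j.succ then 1 else 0) (f i.succ))
           = fun i : Fin n => List.replicate (if i = j then 1 else 0) (f i.succ) := by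
        funext i; simp [Fin.succ_inj]
      rw [this, ih j (fun i => f i.succ)]

variable {m : ℕ} {a : Fin m → E}

lemma mulSum_add {k l : Fin m → ℕ} {x₁ x₂ x : E}
    (hk : W.mulSum a k = some x₁) (hl : W.mulSum a l = some x₂)
    (hx : W.oplus x₁ x₂ = some x) :
    W.mulSum a (fun t => k t + l t) = some x := by
  unfold mulSum at hk hl ⊢
  have hrep : (fun t => List.replicate (k t + l t) (a t))
      = fun t => List.replicate (k t) (a t) ++ List.replicate (l t) (a t) := by
    funext t; rw [List.replicate_add]
  rw [hrep]
  exact W.listSum_perm (flatten_add_perm _ _).symm x (W.listSum_append hk hl hx)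

lemma mulSum_single (t : Fin m) :
    W.mulSum a (fun u => if u = t then 1 else 0) = some (a t) := by
  unfold mulSum
  rw [flatten_single t a]
  show (W.listSum []).bind (fun y => W.oplus (a t) y) = some (a t)
  simp only [listSum, Option.bind_some]
  exact W.oplus_zero_right (a t)

lemma mulSum_zero : W.mulSum a (fun _ => 0) = some W.zero := by
  unfold mulSum
  simp [listSum]

lemma cancel {p b c v : E} (h1 : W.oplus p b = some v) (h2 : W.oplus p c = some v) :
    b = c := by
  obtain ⟨d, hd, -⟩ := W.orthosupp v
  obtain ⟨bd, hbd, hpbd⟩ := W.assoc' p b d W.one v h1 hd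
  have hdb : W.oplus d b = some bd := by rw [W.comm]; exact hbd
  obtain ⟨pd, hpd, hpdb⟩ := W.assoc p d b W.one bd hdb hpbd
  obtain ⟨cd, hcd, hpcd⟩ := W.assoc' p c d W.one v h2 hd
  have hdc : W.oplus d c = some cd := by rw [W.comm]; exact hcd
  obtain ⟨pd', hpd', hpdc⟩ := W.assoc p d c W.one cd hdc hpcd
  rw [hpd] at hpd'
  have hpdeq : pd = pd' := by injection hpd'
  subst hpdeq
  obtain ⟨q, hq, huniq⟩ := W.orthosupp pd
  rw [huniq b hpdb, huniq c hpdc]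

lemma le_refl' (p : E) : W.le p p := ⟨W.zero, W.oplus_zero_right p⟩

lemma le_trans' {p q r : E} (h1 : W.le p q) (h2 : W.le q r) : W.le p r := by
  obtain ⟨u, hu⟩ := h1
  obtain ⟨v, hv⟩ := h2
  obtain ⟨uv, -, huv⟩ := W.assoc' p u v r q hu hv
  exact ⟨uv, huv⟩

lemma eq_zero_of_oplus_eq_zero {y u : E} (h : W.oplus y u = some W.zero) :
    y = W.zero ∧ u = W.zero := by
  have h1 : W.oplus W.zero W.one = some W.one := W.oplus_zero_left W.one
  obtain ⟨u1, hu1, -⟩ := W.assoc' y u W.one W.one W.zero h h1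
  have hu0 : u = W.zero := W.zero_unit u u1 (by rw [W.comm]; exact hu1)
  subst hu0
  rw [W.oplus_zero_right] at h
  exact ⟨by injection h, rfl⟩

lemma le_antisymm' {p q : E} (h1 : W.le p q) (h2 : W.le q p) : p = q := by
  obtain ⟨r, hr⟩ := h1
  obtain ⟨u, hu⟩ := h2
  obtain ⟨ru, hru, hpru⟩ := W.assoc' p r u p q hr hu
  have hr0 : ru = W.zero := W.cancel hpru (W.oplus_zero_right p)
  subst hr0
  have := (W.eq_zero_of_oplus_eq_zero hru).1
  subst this
  rw [W.oplus_zero_right] at hr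
  injection hr

lemma repr_exists [Fintype E] (ha : W.AtomFamily a) (x : E) :
    ∃ n : Fin m → ℕ, W.mulSum a n = some x := by
  classical
  set lt : E → E → Prop := fun y z => W.le y z ∧ y ≠ z with hltdef
  have hwf : WellFounded lt := by
    haveI : IsTrans E lt := ⟨by
      rintro p q r ⟨h1, hne1⟩ ⟨h2, hne2⟩
      refine ⟨W.le_trans' h1 h2, fun h => ?_⟩
      subst h
      exact hne1 (W.le_antisymm' h1 h2)⟩
    haveI : IsIrrefl E lt := ⟨by rintro p ⟨-, hne⟩; exact hne rfl⟩
    exact Finite.wellFounded_of_trans_of_irrefl lt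
  refine hwf.induction (C := fun x => ∃ n : Fin m → ℕ, W.mulSum a n = some x) x ?_
  intro x ih
  by_cases hx0 : x = W.zero
  · exact ⟨fun _ => 0, by rw [hx0]; exact W.mulSum_zero⟩
  · obtain ⟨b, ⟨hb0, hbx⟩, hmin⟩ :=
      hwf.has_min {y | y ≠ W.zero ∧ W.le y x} ⟨x, hx0, W.le_refl' x⟩
    have hbatom : W.IsAtomElem b := by
      refine ⟨hb0, fun y hy hy0 => ?_⟩
      by_contra hne
      exact hmin y ⟨hy0, W.le_trans' hy hbx⟩ ⟨hy, hne⟩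
    obtain ⟨t, hbt⟩ := ha.2.2 b hbatom
    obtain ⟨r, hbr⟩ := hbx
    have hrx : r ≠ x := by
      intro h; subst h
      have h1 : W.oplus r b = some r := by rw [W.comm]; exact hbr
      exact hb0 (W.cancel h1 (W.oplus_zero_right r))
    obtain ⟨n, hn⟩ := ih r ⟨⟨b, by rw [W.comm]; exact hbr⟩, hrx⟩
    rw [hbt] at hbr
    exact ⟨fun u => (if u = t then 1 else 0) + n u,
      W.mulSum_add (W.mulSum_single t) hn hbr⟩

end EffectAlgebra

/-- `(A|1)`: the matrix `A` augmented by a column of ones. -/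
def augmentOnes {n m : ℕ} {R : Type*} [One R] (A : Matrix (Fin n) (Fin m) R) :
    Matrix (Fin n) (Fin (m + 1)) R :=
  Matrix.of fun i j => if h : (j : ℕ) < m then A i ⟨j, h⟩ else 1

/-- Additivity: if `x₁ = ⨁ k t • a t`, `x₂ = ⨁ l t • a t` and `x₁ ⊕ x₂` is
defined, then `∑ k t * s t + ∑ l t * s t ≤ 1` and
`x₁ ⊕ x₂ = ⨁ (k t + l t) • a t`. -/
theorem sum_additive {E : Type*} [Fintype E] (W : EffectAlgebra E)
    {m : ℕ} (a : Fin m → E) (ha : W.AtomFamily a)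
    (s : Fin m → ℝ) (hs : ∀ t, 0 ≤ s t)
    (hsol : ∀ y ∈ W.SeqSet a, ∑ t : Fin m, (y t : ℝ) * s t = 1)
    (x₁ x₂ x : E) (k l : Fin m → ℕ)
    (hk : W.mulSum a k = some x₁) (hl : W.mulSum a l = some x₂)
    (hx : W.oplus x₁ x₂ = some x) :
    (∑ t : Fin m, (k t : ℝ) * s t) + (∑ t : Fin m, (l t : ℝ) * s t) ≤ 1 ∧
      W.mulSum a (fun t => k t + l t) = some x := by
  have h2 : W.mulSum a (fun t => k t + l t) = some x := W.mulSum_add hk hl hx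
  refine ⟨?_, h2⟩
  obtain ⟨x', hx', -⟩ := W.orthosupp x
  obtain ⟨n, hn⟩ := W.repr_exists ha x'
  have hseq : (fun t => (k t + l t) + n t) ∈ W.SeqSet a := W.mulSum_add h2 hn hx'
  have hone := hsol _ hseq
  have hnn : 0 ≤ ∑ t : Fin m, (n t : ℝ) * s t :=
    Finset.sum_nonneg fun t _ => mul_nonneg (Nat.cast_nonneg _) (hs t)
  have hexp : ∑ t : Fin m, ((k t + l t + n t : ℕ) : ℝ) * s t
      = (∑ t : Fin m, (k t : ℝ) * s t) + (∑ t : Fin m, (l t : ℝ) * s t)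
        + ∑ t : Fin m, (n t : ℝ) * s t := by
    rw [← Finset.sum_add_distrib, ← Finset.sum_add_distrib]
    refine Finset.sum_congr rfl fun t _ => by push_cast; ring
  rw [hexp] at hone
  linarith
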